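/- arXiv:1507.08139 — 2 statements merged into one kernel-verified Lean document; each statement's English description precedes it below -/
import Mathlib

section
/- Consider a rooted tree whose vertices are 'clusters', each cluster containing a positive number of nodes, such that for any two adjacent clusters at least one contains more than k nodes, and the total number of nodes over all clusters is n. Then the number of internal (non-leaf) clusters is at most 2n/k. -/
/-- in a rooted cluster tree (given by a parent function with
root `r`) where every cluster holds a positive number of nodes, any two
adjacent clusters include one with more than `k` nodes, and the clusters
hold `n` nodes in total, the number of internal (non-leaf) clusters is at
most `2n/k`. -/
theorem internal_clusters_bound
    {C : Type*} [Fintype C] [DecidableEq C]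
    (parent : C → C) (r : C)
    (hroot : parent r = r)
    (hreach : ∀ c : C, ∃ m : ℕ, parent^[m] c = r)
    (w : C → ℕ) (hw : ∀ c, 0 < w c)
    (k n : ℕ) (hk : 0 < k)
    (hn : ∑ c : C, w c = n)
    (hadj : ∀ c : C, c ≠ r → k < w c ∨ k < w (parent c)) :
    (Finset.univ.filter (fun c : C => ∃ c', c' ≠ r ∧ parent c' = c)).card * k
      ≤ 2 * n := by
  classical
  set I := Finset.univ.filter (fun c : C => ∃ c', c' ≠ r ∧ parent c' = c) with hI
  set H := Finset.univ.filter (fun c : C => k < w c) with hH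
  have hsub : I ⊆ H ∪ H.image parent := by
    intro c hc
    simp only [hI, Finset.mem_filter, Finset.mem_univ, true_and] at hc
    obtain ⟨c', hc', hpc⟩ := hc
    rcases hadj c' hc' with h | h
    · exact Finset.mem_union_right _ (Finset.mem_image.mpr
        ⟨c', by simp [hH, h], hpc⟩)
    · exact Finset.mem_union_left _ (by simp [hH, hpc ▸ h])
  have h1 : I.card ≤ 2 * H.card := by
    calc I.card ≤ (H ∪ H.image parent).card := Finset.card_le_card hsub
    _ ≤ H.card + (H.image parent).card := Finset.card_union_le _ _
    _ ≤ H.card + H.card := Nat.add_le_add_left Finset.card_image_le _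
    _ = 2 * H.card := by ring
  have h2 : H.card * k ≤ n := by
    calc H.card * k = ∑ _c ∈ H, k := by rw [Finset.sum_const, smul_eq_mul]
    _ ≤ ∑ c ∈ H, w c := Finset.sum_le_sum (fun c hc =>
        le_of_lt (by simpa [hH] using hc))
    _ ≤ ∑ c : C, w c := Finset.sum_le_sum_of_subset (Finset.subset_univ _)
    _ = n := hn
  calc I.card * k ≤ 2 * H.card * k := by gcongr
  _ = 2 * (H.card * k) := by ring
  _ ≤ 2 * n := by omega
end

section
/- Let f be an antisymmetric circulation and let C be a cycle of fractional edges with forward availability a = min over edges e in C of (⌈f(e)⌉ - f(e)) and backward availability b = min over edges e of (f(e) - ⌊f(e)⌋). Then a > 0, b > 0, and after adding a to the flow on every forward edge of C (pushing a units around C), at least one edge of C has integral flow, and every edge of C still satisfies ⌊f(e)⌋ ≤ f'(e) ≤ ⌈f(e)⌉. -/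
/-- A circulation: flow conservation at every vertex. -/
def IsCirculation {V : Type*} [Fintype V] (f : V × V → ℝ) : Prop :=
  ∀ v : V, (∑ u : V, f (u, v)) = (∑ u : V, f (v, u))

/-- for a cycle of fractional edges, the forward availability
`a` and backward availability `b` are positive, and pushing `a` units
forward makes some edge integral while keeping every cycle edge between its
floor and ceiling. -/
theorem cancel_fractional_cycle
    {V : Type*} [Fintype V] (f : V × V → ℝ)
    (hanti : ∀ u v : V, f (u, v) = - f (v, u))
    (hcirc : IsCirculation f)
    (m : ℕ) (v : Fin (m + 1) → V) (hv : Function.Injective v)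
    (hfrac : ∀ i : Fin (m + 1), Int.fract (f (v i, v (i + 1))) ≠ 0)
    (a b : ℝ)
    (ha : a = Finset.univ.inf' Finset.univ_nonempty
      (fun i : Fin (m + 1) => (⌈f (v i, v (i + 1))⌉ : ℝ) - f (v i, v (i + 1))))
    (hb : b = Finset.univ.inf' Finset.univ_nonempty
      (fun i : Fin (m + 1) => f (v i, v (i + 1)) - (⌊f (v i, v (i + 1))⌋ : ℝ))) :
    0 < a ∧ 0 < b ∧
      (∃ i : Fin (m + 1), Int.fract (f (v i, v (i + 1)) + a) = 0) ∧
      (∀ i : Fin (m + 1),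
        (⌊f (v i, v (i + 1))⌋ : ℝ) ≤ f (v i, v (i + 1)) + a ∧
          f (v i, v (i + 1)) + a ≤ (⌈f (v i, v (i + 1))⌉ : ℝ)) := by

  have hlt : ∀ i : Fin (m + 1), f (v i, v (i + 1)) < (⌈f (v i, v (i + 1))⌉ : ℝ) := by
    intro i
    rcases lt_or_eq_of_le (Int.le_ceil (f (v i, v (i + 1)))) with h | h
    · exact h
    · exact absurd (by rw [h, Int.fract_intCast]) (hfrac i)
  have hflt : ∀ i : Fin (m + 1), (⌊f (v i, v (i + 1))⌋ : ℝ) < f (v i, v (i + 1)) := by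
    intro i
    rcases lt_or_eq_of_le (Int.floor_le (f (v i, v (i + 1)))) with h | h
    · exact h
    · exact absurd (by rw [← h, Int.fract_intCast]) (hfrac i)
  have ha0 : 0 < a := by
    rw [ha, Finset.lt_inf'_iff]
    exact fun i _ => sub_pos.mpr (hlt i)
  have hb0 : 0 < b := by
    rw [hb, Finset.lt_inf'_iff]
    exact fun i _ => sub_pos.mpr (hflt i)
  have hale : ∀ i : Fin (m + 1), a ≤ (⌈f (v i, v (i + 1))⌉ : ℝ) - f (v i, v (i + 1)) := by
    intro i
    rw [ha]
    exact Finset.inf'_le _ (Finset.mem_univ i)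
  refine ⟨ha0, hb0, ?_, ?_⟩
  · obtain ⟨i, _, hi⟩ := Finset.exists_mem_eq_inf' Finset.univ_nonempty
      (fun i : Fin (m + 1) => (⌈f (v i, v (i + 1))⌉ : ℝ) - f (v i, v (i + 1)))
    refine ⟨i, ?_⟩
    have : f (v i, v (i + 1)) + a = (⌈f (v i, v (i + 1))⌉ : ℝ) := by
      rw [ha, hi]; ring
    rw [this, Int.fract_intCast]
  · intro i
    constructor
    · linarith [hflt i, ha0]
    · linarith [hale i]
end
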